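/- arXiv:2102.03593 — 2 statements merged into one kernel-verified Lean document; each statement's English description precedes it below -/
import Mathlib

section
/- For the homoclinic solution w of w'' - w + w^p = 0 with w(±∞)=0, one has the identity ∫_ℝ w² dx = 2σ ∫_ℝ (w')² dx, where σ = (p+1)/(p-1) - 1/2. -/
open Real MeasureTheory Filter Topology Set

noncomputable def Ufun (a x : ℝ) : ℝ := Real.exp (a*x) + Real.exp (-(a*x))
noncomputable def Tfun (a x : ℝ) : ℝ := (Real.exp (a*x) - Real.exp (-(a*x))) / (Real.exp (a*x) + Real.exp (-(a*x)))

lemma Ufun_pos (a x : ℝ) : 0 < Ufun a x := by unfold Ufun; positivity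

lemma hasDerivAt_U (a x : ℝ) : HasDerivAt (fun y => Ufun a y)
    (a * (Real.exp (a*x) - Real.exp (-(a*x)))) x := by
  have h1 : HasDerivAt (fun y : ℝ => a*y) a x := by simpa using (hasDerivAt_id x).const_mul a
  have h2 : HasDerivAt (fun y : ℝ => -(a*y)) (-a) x := h1.neg
  have := (h1.exp.add h2.exp)
  convert this using 1
  · rfl
  · rfl
  · rfl
  simp [Ufun]
  ring

lemma hasDerivAt_w (a c : ℝ) (ha : a ≠ 0) (x : ℝ) :
    HasDerivAt (fun y => c * (Ufun a y) ^ (-(1/a)))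
      (-(c * (Ufun a x) ^ (-(1/a))) * Tfun a x) x := by
  have hu := Ufun_pos a x
  have h := ((hasDerivAt_U a x).rpow_const (p := -(1/a)) (Or.inl hu.ne')).const_mul c
  convert h using 1
  · rfl
  · rfl
  rw [show (-(1/a) - 1 : ℝ) = -(1/a) - 1 from rfl, Real.rpow_sub_one hu.ne']
  unfold Tfun Ufun
  field_simp [Tfun, Ufun]

lemma hasDerivAt_T (a x : ℝ) : HasDerivAt (fun y => Tfun a y)
    (a * (1 - (Tfun a x)^2)) x := by
  have hu := Ufun_pos a x
  have hS : HasDerivAt (fun y => Real.exp (a*y) - Real.exp (-(a*y)))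
      (a * Ufun a x) x := by
    have h1 : HasDerivAt (fun y : ℝ => a*y) a x := by simpa using (hasDerivAt_id x).const_mul a
    have := h1.exp.sub h1.neg.exp
    convert this using 1
    · rfl
    · rfl
    · rfl
    simp [Ufun]; ring
  have h := hS.div (hasDerivAt_U a x) hu.ne'
  convert h using 1
  · rfl
  · rfl
  · rfl
  have hU2 : Ufun a x ≠ 0 := hu.ne'
  unfold Tfun Ufun
  field_simp [Tfun, Ufun]

lemma Tfun_abs_le (a x : ℝ) : |Tfun a x| ≤ 1 := by
  have h1 := Real.exp_pos (a*x)
  have h2 := Real.exp_pos (-(a*x))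
  have hu : |Real.exp (a*x) + Real.exp (-(a*x))| = Real.exp (a*x) + Real.exp (-(a*x)) :=
    abs_of_pos (by positivity)
  rw [Tfun, abs_div, hu, div_le_one (by positivity), abs_le]
  constructor <;> nlinarith

noncomputable def wf (a c x : ℝ) : ℝ := c * (Ufun a x) ^ (-(1/a))
noncomputable def gf (a c x : ℝ) : ℝ := (wf a c x)^2 * Tfun a x / a

lemma hasDerivAt_g (a c : ℝ) (ha : a ≠ 0) (x : ℝ) :
    HasDerivAt (fun y => gf a c y)
      ((wf a c x)^2 - (1 + 2/a) * (wf a c x * Tfun a x)^2) x := by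
  have hw := hasDerivAt_w a c ha x
  have hw2 : HasDerivAt (fun y => (wf a c y)^2)
      (2 * wf a c x * (-(wf a c x) * Tfun a x)) x := by
    have := hw.pow 2
    convert this using 1
    · rfl
    · rfl
    · rfl
    simp only [wf]
    push_cast
    ring
  have h := ((hw2.mul (hasDerivAt_T a x)).div_const a)
  convert h using 1
  · rfl
  · rfl
  · rfl
  field_simp [gf]
  ring

lemma wf_sq_bound_pos (a c : ℝ) (ha : 0 < a) (hc : 0 ≤ c) {x : ℝ} (hx : 0 ≤ x) :
    (wf a c x)^2 ≤ c^2 * Real.exp (-x) := by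
  have hU : Real.exp (a*x) ≤ Ufun a x := by
    unfold Ufun; nlinarith [Real.exp_pos (-(a*x))]
  have h1 : (Ufun a x) ^ (-(1/a)) ≤ Real.exp (a*x) ^ (-(1/a) : ℝ) :=
    Real.rpow_le_rpow_of_nonpos (Real.exp_pos _) hU (neg_nonpos.mpr (by positivity))
  have h2 : Real.exp (a*x) ^ (-(1/a) : ℝ) = Real.exp (-x) := by
    rw [← Real.exp_mul]; congr 1; field_simp; try ring
  have h3 : (Ufun a x) ^ (-(1/a)) ≤ Real.exp (-x) := h2 ▸ h1
  have h4 : (0:ℝ) ≤ (Ufun a x) ^ (-(1/a)) := Real.rpow_nonneg (Ufun_pos a x).le _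
  have h5 : Real.exp (-x) ≤ 1 := Real.exp_le_one_iff.mpr (by linarith)
  have h6 : ((Ufun a x) ^ (-(1/a)))^2 ≤ Real.exp (-x) ^ 2 := pow_le_pow_left₀ h4 h3 2
  have h7 : Real.exp (-x) ^ 2 ≤ Real.exp (-x) := by nlinarith [Real.exp_pos (-x)]
  calc (wf a c x)^2 = c^2 * ((Ufun a x) ^ (-(1/a)))^2 := by unfold wf; ring
    _ ≤ c^2 * Real.exp (-x) := by nlinarith [sq_nonneg c]

lemma wf_sq_bound_neg (a c : ℝ) (ha : 0 < a) (hc : 0 ≤ c) {x : ℝ} (hx : x ≤ 0) :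
    (wf a c x)^2 ≤ c^2 * Real.exp x := by
  have hU : Real.exp (-(a*x)) ≤ Ufun a x := by
    unfold Ufun; nlinarith [Real.exp_pos (a*x)]
  have h1 : (Ufun a x) ^ (-(1/a)) ≤ Real.exp (-(a*x)) ^ (-(1/a) : ℝ) :=
    Real.rpow_le_rpow_of_nonpos (Real.exp_pos _) hU (neg_nonpos.mpr (by positivity))
  have h2 : Real.exp (-(a*x)) ^ (-(1/a) : ℝ) = Real.exp x := by
    rw [← Real.exp_mul]; congr 1; field_simp; try ring
  have h3 : (Ufun a x) ^ (-(1/a)) ≤ Real.exp x := h2 ▸ h1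
  have h4 : (0:ℝ) ≤ (Ufun a x) ^ (-(1/a)) := Real.rpow_nonneg (Ufun_pos a x).le _
  have h5 : Real.exp x ≤ 1 := Real.exp_le_one_iff.mpr hx
  have h6 : ((Ufun a x) ^ (-(1/a)))^2 ≤ Real.exp x ^ 2 := pow_le_pow_left₀ h4 h3 2
  have h7 : Real.exp x ^ 2 ≤ Real.exp x := by nlinarith [Real.exp_pos x]
  calc (wf a c x)^2 = c^2 * ((Ufun a x) ^ (-(1/a)))^2 := by unfold wf; ring
    _ ≤ c^2 * Real.exp x := by nlinarith [sq_nonneg c]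

lemma wf_tendsto_atTop (a c : ℝ) (ha : 0 < a) :
    Filter.Tendsto (fun x => wf a c x) Filter.atTop (nhds 0) := by
  have hU : Filter.Tendsto (fun x => Ufun a x) Filter.atTop Filter.atTop := by
    apply Filter.Tendsto.atTop_add_nonneg
    · exact Real.tendsto_exp_atTop.comp (Filter.tendsto_id.const_mul_atTop ha)
    · intro x; positivity
  have := (tendsto_rpow_neg_atTop (by positivity : (0:ℝ) < 1/a)).comp hU
  have h2 := this.const_mul c
  simpa [wf, Function.comp] using h2

lemma wf_tendsto_atBot (a c : ℝ) (ha : 0 < a) :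
    Filter.Tendsto (fun x => wf a c x) Filter.atBot (nhds 0) := by
  have hU : Filter.Tendsto (fun x => Ufun a x) Filter.atBot Filter.atTop := by
    apply Filter.Tendsto.nonneg_add_atTop
    · intro x; positivity
    · have hneg : Filter.Tendsto (fun x : ℝ => -(a*x)) Filter.atBot Filter.atTop := by
        have : Filter.Tendsto (fun x : ℝ => a*x) Filter.atBot Filter.atBot :=
          Filter.tendsto_id.const_mul_atBot ha
        exact Filter.tendsto_neg_atBot_atTop.comp this
      exact Real.tendsto_exp_atTop.comp hneg
  have := (tendsto_rpow_neg_atTop (by positivity : (0:ℝ) < 1/a)).comp hU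
  have h2 := this.const_mul c
  simpa [wf, Function.comp] using h2

lemma gf_tendsto_atTop (a c : ℝ) (ha : 0 < a) :
    Filter.Tendsto (fun x => gf a c x) Filter.atTop (nhds 0) := by
  have hw := wf_tendsto_atTop a c ha
  have h : Filter.Tendsto (fun x => (wf a c x)^2 / a) Filter.atTop (nhds 0) := by
    have := ((hw.mul hw).div_const a)
    simpa [sq] using this
  apply squeeze_zero_norm _ h
  intro x
  have hT := Tfun_abs_le a x
  have e1 : |gf a c x| = (wf a c x)^2 * |Tfun a x| / a := by
    rw [gf, abs_div, abs_mul, abs_of_nonneg (sq_nonneg _), abs_of_pos ha]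
  rw [Real.norm_eq_abs, e1]
  have h0 : (wf a c x)^2 * |Tfun a x| ≤ (wf a c x)^2 * 1 :=
    mul_le_mul_of_nonneg_left hT (sq_nonneg _)
  rw [mul_one] at h0
  exact div_le_div_of_nonneg_right h0 ha.le

lemma gf_tendsto_atBot (a c : ℝ) (ha : 0 < a) :
    Filter.Tendsto (fun x => gf a c x) Filter.atBot (nhds 0) := by
  have hw := wf_tendsto_atBot a c ha
  have h : Filter.Tendsto (fun x => (wf a c x)^2 / a) Filter.atBot (nhds 0) := by
    have := ((hw.mul hw).div_const a)
    simpa [sq] using this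
  apply squeeze_zero_norm _ h
  intro x
  have hT := Tfun_abs_le a x
  have e1 : |gf a c x| = (wf a c x)^2 * |Tfun a x| / a := by
    rw [gf, abs_div, abs_mul, abs_of_nonneg (sq_nonneg _), abs_of_pos ha]
  rw [Real.norm_eq_abs, e1]
  have h0 : (wf a c x)^2 * |Tfun a x| ≤ (wf a c x)^2 * 1 :=
    mul_le_mul_of_nonneg_left hT (sq_nonneg _)
  rw [mul_one] at h0
  exact div_le_div_of_nonneg_right h0 ha.le

lemma hasDerivAt_wf (a c : ℝ) (ha : a ≠ 0) (x : ℝ) :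
    HasDerivAt (fun y => wf a c y) (-(wf a c x) * Tfun a x) x := by
  simpa [wf] using hasDerivAt_w a c ha x

lemma continuous_wf (a c : ℝ) : Continuous (fun x => wf a c x) := by
  unfold wf Ufun
  apply Continuous.mul continuous_const
  apply Continuous.rpow_const
  · exact (Real.continuous_exp.comp (continuous_const.mul continuous_id)).add
      (Real.continuous_exp.comp ((continuous_const.mul continuous_id).neg))
  · intro x
    exact Or.inl (Ufun_pos a x).ne'

lemma continuous_T (a : ℝ) : Continuous (fun x => Tfun a x) := by
  unfold Tfun
  apply Continuous.div
  · exact (Real.continuous_exp.comp (continuous_const.mul continuous_id)).sub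
      (Real.continuous_exp.comp ((continuous_const.mul continuous_id).neg))
  · exact (Real.continuous_exp.comp (continuous_const.mul continuous_id)).add
      (Real.continuous_exp.comp ((continuous_const.mul continuous_id).neg))
  · intro x; exact (Ufun_pos a x).ne'

lemma integrable_wf_sq (a c : ℝ) (ha : 0 < a) (hc : 0 ≤ c) :
    Integrable (fun x => (wf a c x)^2) := by
  have hmeas : AEStronglyMeasurable (fun x => (wf a c x)^2) volume :=
    ((continuous_wf a c).pow 2).aestronglyMeasurable
  have hIoi : IntegrableOn (fun x => (wf a c x)^2) (Ioi 0) := by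
    apply Integrable.mono' (((exp_neg_integrableOn_Ioi 0 one_pos)).const_mul (c^2))
      hmeas.restrict
    filter_upwards [ae_restrict_mem measurableSet_Ioi] with x hx
    rw [Real.norm_eq_abs, abs_of_nonneg (sq_nonneg _)]
    have := wf_sq_bound_pos a c ha hc (le_of_lt hx)
    simpa [neg_one_mul] using this
  have hIic : IntegrableOn (fun x => (wf a c x)^2) (Iic 0) := by
    apply Integrable.mono' ((integrableOn_exp_Iic 0).const_mul (c^2)) hmeas.restrict
    filter_upwards [ae_restrict_mem measurableSet_Iic] with x hx
    rw [Real.norm_eq_abs, abs_of_nonneg (sq_nonneg _)]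
    exact wf_sq_bound_neg a c ha hc hx
  have : IntegrableOn (fun x => (wf a c x)^2) (Iic 0 ∪ Ioi 0) := hIic.union hIoi
  rwa [Set.Iic_union_Ioi, integrableOn_univ] at this

lemma integrable_wfT_sq (a c : ℝ) (ha : 0 < a) (hc : 0 ≤ c) :
    Integrable (fun x => (wf a c x * Tfun a x)^2) := by
  apply Integrable.mono' (integrable_wf_sq a c ha hc)
    (((continuous_wf a c).mul (continuous_T a)).pow 2).aestronglyMeasurable
  filter_upwards with x
  rw [Real.norm_eq_abs, abs_of_nonneg (sq_nonneg _), mul_pow]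
  have hT := Tfun_abs_le a x
  have : (Tfun a x)^2 ≤ 1 := by
    rw [← sq_abs]; nlinarith [abs_nonneg (Tfun a x)]
  simp only [Pi.mul_apply, Pi.pow_apply]
  nlinarith [sq_nonneg (wf a c x)]

lemma gf_zero (a c : ℝ) : gf a c 0 = 0 := by
  simp [gf, Tfun]

lemma integral_identity (a c : ℝ) (ha : 0 < a) (hc : 0 ≤ c) :
    (∫ x : ℝ, (wf a c x)^2) = (1 + 2/a) * ∫ x : ℝ, (wf a c x * Tfun a x)^2 := by
  have hInt1 := integrable_wf_sq a c ha hc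
  have hInt2 := integrable_wfT_sq a c ha hc
  set F : ℝ → ℝ := fun x => (wf a c x)^2 - (1 + 2/a) * (wf a c x * Tfun a x)^2 with hF
  have hFint : Integrable F := hInt1.sub (hInt2.const_mul _)
  have hFderiv : ∀ x : ℝ, HasDerivAt (fun y => gf a c y) (F x) x :=
    fun x => hasDerivAt_g a c ha.ne' x
  have hIoi : ∫ x in Set.Ioi (0:ℝ), F x = 0 := by
    rw [integral_Ioi_of_hasDerivAt_of_tendsto' (fun x _ => hFderiv x)
      hFint.integrableOn (gf_tendsto_atTop a c ha), gf_zero, sub_zero]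
  have hIic : ∫ x in Set.Iic (0:ℝ), F x = 0 := by
    rw [integral_Iic_of_hasDerivAt_of_tendsto' (fun x _ => hFderiv x)
      hFint.integrableOn (gf_tendsto_atBot a c ha), gf_zero, zero_sub, neg_zero]
  have hzero : ∫ x : ℝ, F x = 0 := by
    rw [← intervalIntegral.integral_Iic_add_Ioi hFint.integrableOn hFint.integrableOn, hIoi, hIic, add_zero]
  have := integral_sub hInt1 (hInt2.const_mul (1 + 2/a))
  rw [hF] at hzero
  rw [hzero] at this
  rw [MeasureTheory.integral_const_mul] at this
  linarith [this.symm]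

theorem stmt_3 (p σ : ℝ) (hp : 1 < p) (hσ : σ = (p + 1) / (p - 1) - 1 / 2)
    (w : ℝ → ℝ)
    (hw : ∀ x : ℝ, w x = ((p + 1) / 2) ^ (1 / (p - 1)) *
      (Real.exp ((p - 1) * x / 2) + Real.exp (-(p - 1) * x / 2)) ^ (-2 / (p - 1))) :
    (∫ x : ℝ, (w x) ^ 2) = 2 * σ * ∫ x : ℝ, (deriv w x) ^ 2 := by
  set a : ℝ := (p - 1) / 2 with ha_def
  set c : ℝ := ((p + 1) / 2) ^ (1 / (p - 1) : ℝ) with hc_def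
  have ha : 0 < a := by rw [ha_def]; linarith
  have hc : 0 ≤ c := Real.rpow_nonneg (by linarith) _
  have hwfun : w = fun x => wf a c x := by
    funext x
    rw [hw, wf, Ufun]
    rw [show (p - 1) * x / 2 = a * x by rw [ha_def]; ring,
      show -(p - 1) * x / 2 = -(a * x) by rw [ha_def]; ring,
      show (-2 / (p - 1) : ℝ) = -(1/a) by rw [ha_def]; field_simp]
  have hd : ∀ x : ℝ, deriv w x = -(wf a c x) * Tfun a x := by
    intro x
    rw [hwfun]
    exact (hasDerivAt_wf a c ha.ne' x).deriv
  have hds : ∀ x : ℝ, (deriv w x)^2 = (wf a c x * Tfun a x)^2 := by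
    intro x; rw [hd]; ring
  have hne : p - 1 ≠ 0 := by linarith
  have h2σ : (1 + 2/a : ℝ) = 2 * σ := by
    rw [hσ, ha_def]
    field_simp
    ring
  calc (∫ x : ℝ, (w x)^2) = ∫ x : ℝ, (wf a c x)^2 := by rw [hwfun]
    _ = (1 + 2/a) * ∫ x : ℝ, (wf a c x * Tfun a x)^2 := integral_identity a c ha hc
    _ = 2 * σ * ∫ x : ℝ, (deriv w x)^2 := by rw [h2σ]; simp only [hds]
end

section
/- Given a > 0, c > 0 and a parameter ε ∈ (0, 1), for all sufficiently small ε there exists a unique ρ > 0 solving e^{-ρ} = ε² c ρ, and it satisfies ρ = 2|ln ε| - ln(2|ln ε|) - ln c + O(ln(2|ln ε|)/|ln ε|) as ε → 0. -/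
private lemma mono_aux10 {x y : ℝ} (hx : 0 < x) (hxy : x < y) :
    x * Real.exp x < y * Real.exp y :=
  mul_lt_mul'' hxy (Real.exp_lt_exp.2 hxy) hx.le (Real.exp_pos x).le

private lemma arith_low10 {C D L lc E δ : ℝ} (hC1 : 1 ≤ C) (hD1 : 1 ≤ D)
    (hLpos : 0 < L) (hδ0 : 0 < δ) (hLδ : L * δ = C * D)
    (hlc : -(C - 1) ≤ lc) (hE : δ + 1 ≤ E) :
    2*L - D - lc - δ ≤ 2*L*E := by
  have h1 : 2*L*(δ+1) ≤ 2*L*E := by nlinarith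
  nlinarith [mul_nonneg (show (0:ℝ) ≤ C-1 by linarith) (show (0:ℝ) ≤ D-1 by linarith),
    mul_nonneg (show (0:ℝ) ≤ C by linarith) (show (0:ℝ) ≤ D by linarith)]

private lemma arith_up10 {C D L lc δ : ℝ} (hC1 : 1 ≤ C) (hD1 : 1 ≤ D)
    (hδ0 : 0 < δ) (hδ1 : δ ≤ 1) (hLδ : L * δ = C * D)
    (hlc : lc ≤ C - 1) :
    2*L ≤ (2*L - D - lc + δ) * (1 + δ) := by
  have hCD0 : (0:ℝ) ≤ C * D := mul_nonneg (by linarith) (by linarith)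
  have hS : D + lc ≤ C * D := by
    nlinarith [mul_nonneg (show (0:ℝ) ≤ C-1 by linarith) (show (0:ℝ) ≤ D-1 by linarith)]
  have hSδ := mul_le_mul_of_nonneg_right hS (show (0:ℝ) ≤ 1 + δ by linarith)
  have hCDδ : C*D*δ ≤ C*D := by nlinarith
  nlinarith

set_option maxHeartbeats 1000000 in
theorem stmt_10 (a c : ℝ) (ha : 0 < a) (hc : 0 < c) :
    ∃ C : ℝ, 0 < C ∧ ∃ ε₀ : ℝ, 0 < ε₀ ∧ ε₀ < 1 ∧
      ∀ ε : ℝ, 0 < ε → ε < ε₀ →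
        (∃! ρ : ℝ, 0 < ρ ∧ Real.exp (-ρ) = ε ^ 2 * c * ρ) ∧
        (∀ ρ : ℝ, 0 < ρ → Real.exp (-ρ) = ε ^ 2 * c * ρ →
          |ρ - (2 * |Real.log ε| - Real.log (2 * |Real.log ε|) - Real.log c)|
            ≤ C * Real.log (2 * |Real.log ε|) / |Real.log ε|) := by
  set C : ℝ := 1 + |Real.log c| with hCdef
  have hC : (0:ℝ) < C := by positivity
  have hC1 : (1:ℝ) ≤ C := le_add_of_nonneg_right (abs_nonneg _)
  refine ⟨C, hC, Real.exp (-(8*C^2 + Real.exp 1 + 1)), Real.exp_pos _, ?_, ?_⟩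
  · rw [Real.exp_lt_one_iff]
    nlinarith [Real.exp_pos 1, sq_nonneg C]
  intro ε hε hεlt
  set L : ℝ := -Real.log ε with hLdef
  clear_value L
  have hlogε : Real.log ε < -(8*C^2 + Real.exp 1 + 1) := by
    have := Real.log_lt_log hε hεlt
    rwa [Real.log_exp] at this
  have hL : 8*C^2 + Real.exp 1 + 1 < L := by
    rw [hLdef]; linarith
  have hLpos : 0 < L := by nlinarith [Real.exp_pos 1, sq_nonneg C]
  have habs : |Real.log ε| = L := by
    rw [abs_of_neg (by nlinarith [Real.exp_pos 1, sq_nonneg C])]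
    exact hLdef.symm
  have hD1 : 1 ≤ Real.log (2*L) := by
    rw [Real.le_log_iff_exp_le (by positivity)]
    nlinarith [sq_nonneg C]
  set D : ℝ := Real.log (2*L) with hDdef
  clear_value D
  have hDpos : 0 < D := lt_of_lt_of_le one_pos hD1
  -- C * D ≤ L, so δ := C*D/L ≤ 1
  have hCD : C * D ≤ L := by
    have hs : Real.sqrt (2*L) ^ 2 = 2*L := Real.sq_sqrt (by positivity)
    have hs0 : 0 ≤ Real.sqrt (2*L) := Real.sqrt_nonneg _
    have hD2 : D ≤ 2 * Real.sqrt (2*L) := by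
      have h1 := Real.log_le_sub_one_of_pos (x := Real.sqrt (2*L)) (by positivity)
      have h2 : Real.log (Real.sqrt (2*L)) = D / 2 := by
        rw [Real.log_sqrt (by positivity), ← hDdef]
      linarith
    nlinarith [sq_nonneg (Real.sqrt (2*L) - 4*C), mul_le_mul_of_nonneg_left hD2 hC.le,
      Real.exp_pos 1]
  -- the transformed equation
  have hT : ∀ ρ : ℝ, (Real.exp (-ρ) = ε^2*c*ρ ↔ ρ * Real.exp ρ = Real.exp (2*L) / c) := by
    intro ρ
    have e1 : Real.exp (-ρ) * Real.exp ρ = 1 := by rw [← Real.exp_add]; simp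
    have e2 : ε^2 * Real.exp (2*L) = 1 := by
      rw [show ε^2 = Real.exp (Real.log ε + Real.log ε) by
            rw [Real.exp_add, Real.exp_log hε, sq],
        ← Real.exp_add,
        show Real.log ε + Real.log ε + 2*L = 0 by rw [hLdef]; ring, Real.exp_zero]
    rw [eq_div_iff (ne_of_gt hc)]
    constructor
    · intro h
      linear_combination Real.exp (2*L) * e1 - (c*ρ*Real.exp ρ) * e2
        - (Real.exp ρ * Real.exp (2*L)) * h
    · intro h
      linear_combination -Real.exp (-ρ) * e2 - Real.exp (-ρ)*ε^2*h + ε^2*c*ρ*e1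
  -- existence
  have hTpos : 0 < Real.exp (2*L) / c := by positivity
  have hex : ∃ ρ : ℝ, 0 < ρ ∧ ρ * Real.exp ρ = Real.exp (2*L)/c := by
    set T := Real.exp (2*L)/c with hTd
    have hcont : ContinuousOn (fun x => x * Real.exp x) (Set.Icc 0 T) :=
      (continuous_id.mul Real.continuous_exp).continuousOn
    have hmem : T ∈ Set.Icc ((fun x => x * Real.exp x) 0) ((fun x => x*Real.exp x) T) := by
      refine ⟨by simpa using hTpos.le, ?_⟩
      simp only
      nlinarith [Real.add_one_le_exp T]
    obtain ⟨x, hx, hfx⟩ := intermediate_value_Icc hTpos.le hcont hmem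
    refine ⟨x, ?_, hfx⟩
    rcases hx.1.lt_or_eq with h | h
    · exact h
    · exfalso
      rw [← h] at hfx
      simp at hfx
      exact absurd hfx.symm (ne_of_gt hTpos)
  obtain ⟨ρ₀, hρ₀pos, hρ₀⟩ := hex
  have huniq : ∀ ρ : ℝ, 0 < ρ → ρ * Real.exp ρ = Real.exp (2*L)/c → ρ = ρ₀ := by
    intro ρ hpos heq
    rcases lt_trichotomy ρ ρ₀ with h | h | h
    · nlinarith [mono_aux10 hpos h]
    · exact h
    · nlinarith [mono_aux10 hρ₀pos h]
  constructor
  · exact ⟨ρ₀, ⟨hρ₀pos, (hT ρ₀).2 hρ₀⟩, fun y hy => huniq y hy.1 ((hT y).1 hy.2)⟩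
  -- the asymptotic bound
  intro ρ hpos heq0
  have heq : ρ * Real.exp ρ = Real.exp (2*L)/c := (hT ρ).1 heq0
  rw [habs, ← hDdef]
  set δ : ℝ := C * D / L with hδdef
  clear_value δ
  have hδ0 : 0 < δ := by rw [hδdef]; positivity
  have hδ1 : δ ≤ 1 := by rw [hδdef, div_le_one hLpos]; exact hCD
  have hLδ : L * δ = C * D := by rw [hδdef]; field_simp
  have hlogc_le : Real.log c ≤ C - 1 := by
    rw [hCdef]; simp [le_abs_self]
  have hlogc_ge : -(C - 1) ≤ Real.log c := by
    rw [hCdef]; simp [neg_abs_le]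
  set P : ℝ := 2*L - D - Real.log c with hPdef
  clear_value P
  have hexpP : Real.exp P = Real.exp (2*L) / ((2*L)*c) := by
    rw [hPdef, show 2*L - D - Real.log c = 2*L + (-D) + (-Real.log c) by ring,
      Real.exp_add, Real.exp_add, Real.exp_neg, Real.exp_neg,
      hDdef, Real.exp_log (by positivity : (0:ℝ) < 2*L), Real.exp_log hc]
    field_simp
  have h7 : 2*L * (Real.exp (2*L) / ((2*L)*c)) = Real.exp (2*L)/c := by
    field_simp
  rw [abs_le]
  constructor
  · -- lower bound: ρ ≥ P - δ
    by_contra hcon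
    push_neg at hcon
    have hlt : ρ < P - δ := by linarith
    have hmono := mono_aux10 hpos hlt
    have hub : P - δ ≤ 2*L * Real.exp δ := by
      rw [hPdef]
      exact arith_low10 hC1 hD1 hLpos hδ0 hLδ hlogc_ge (Real.add_one_le_exp δ)
    have hkey : (P - δ) * Real.exp (P - δ) ≤ Real.exp (2*L)/c := by
      have h4 : Real.exp δ * Real.exp (P - δ) = Real.exp P := by
        rw [← Real.exp_add]; ring_nf
      have h5 : (P - δ) * Real.exp (P - δ) ≤ 2*L * Real.exp δ * Real.exp (P - δ) :=
        mul_le_mul_of_nonneg_right hub (Real.exp_pos _).le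
      have h6 : 2*L * Real.exp δ * Real.exp (P - δ) = 2*L * Real.exp P := by
        rw [mul_assoc, h4]
      rw [h6, hexpP] at h5
      linarith
    rw [heq] at hmono
    linarith
  · -- upper bound: ρ ≤ P + δ
    by_contra hcon
    push_neg at hcon
    have hgt : P + δ < ρ := by linarith
    have hlb : 2*L * Real.exp (-δ) ≤ P + δ := by
      have h1' : Real.exp (-δ) ≤ 1/(1+δ) := by
        rw [Real.exp_neg, one_div]
        exact inv_anti₀ (by linarith) (by linarith [Real.add_one_le_exp δ])
      have h2 : 2*L * Real.exp (-δ) ≤ 2*L/(1+δ) := by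
        calc 2*L * Real.exp (-δ) ≤ 2*L * (1/(1+δ)) :=
              mul_le_mul_of_nonneg_left h1' (by positivity)
          _ = 2*L/(1+δ) := by ring
      have h3 : 2*L/(1+δ) ≤ P + δ := by
        rw [div_le_iff₀ (by linarith : (0:ℝ) < 1+δ)]
        calc 2*L ≤ (2*L - D - Real.log c + δ) * (1 + δ) :=
              arith_up10 hC1 hD1 hδ0 hδ1 hLδ hlogc_le
          _ = (P + δ) * (1 + δ) := by rw [hPdef]
      linarith
    have hPδpos : 0 < P + δ := lt_of_lt_of_le (by positivity) hlb
    have hmono := mono_aux10 hPδpos hgt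
    have hkey : Real.exp (2*L)/c ≤ (P + δ) * Real.exp (P + δ) := by
      have h4 : Real.exp (-δ) * Real.exp (P + δ) = Real.exp P := by
        rw [← Real.exp_add]; ring_nf
      have h5 : 2*L * Real.exp (-δ) * Real.exp (P + δ) ≤ (P + δ) * Real.exp (P + δ) :=
        mul_le_mul_of_nonneg_right hlb (Real.exp_pos _).le
      have h6 : 2*L * Real.exp (-δ) * Real.exp (P + δ) = 2*L * Real.exp P := by
        rw [mul_assoc, h4]
      rw [h6, hexpP] at h5
      linarith
    rw [heq] at hmono
    linarith
end
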